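/- Let J ⊂ I ⊂ S_f be monomial ideals, let S' = K[x_i : i ∉ A] ⊆ S, and let J' ⊂ I' ⊂ S' be monomial ideals with J = J'·S_f and I = I'·S_f. Then I/J = (I'/J')[x_i^{±1} : i ∈ A] and consequently sdepth(I/J) = sdepth(I'/J') + |A|. -/

import Mathlib

/-!
Combinatorial model of the localized polynomial ring `S_f`, where
`S = K[x_1, …, x_n]`, `A ⊆ {1, …, n}` and `f = ∏_{j ∈ A} x_j`.

Since all the `ℤⁿ`-graded components of `S_f` are at most one-dimensional over `K`,
monomial `K`-subspaces of `S_f` (in particular monomial ideals, Stanley spaces and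
modules `I/J`) are faithfully encoded by their sets of exponent vectors `a : Fin n → ℤ`,
direct sum decompositions into monomial subspaces correspond exactly to partitions of
the exponent sets, and (for those sets `Z` considered here) `u·K[Z]` is automatically a
free `K[Z]`-module.
-/

/-- Exponent vectors of the monomials of `S_f`: all `a : ℤⁿ` with `a j ≥ 0` for `j ∉ A`. -/
def SfMon {n : ℕ} (A : Finset (Fin n)) : Set (Fin n → ℤ) :=
  {a | ∀ j, j ∉ A → 0 ≤ a j}

/-- `M` is the set of exponent vectors of the monomials of a monomial ideal of `S_f`
(for `A = ∅` this is a monomial ideal of the polynomial ring `S` itself). -/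
def IsMonomialIdeal {n : ℕ} (A : Finset (Fin n)) (M : Set (Fin n → ℤ)) : Prop :=
  M ⊆ SfMon A ∧ ∀ a ∈ M, ∀ c ∈ SfMon A, a + c ∈ M

/-- Admissible sets of "variables" for Stanley spaces in `S_f`: `(i, true)` stands for
`x i` and `(i, false)` for `x i⁻¹`; inverse variables exist only for `i ∈ A`, and
`{x i, x i⁻¹} ⊄ Z`. -/
def ZOk {n : ℕ} (A : Finset (Fin n)) (Z : Finset (Fin n × Bool)) : Prop :=
  (∀ i : Fin n, (i, false) ∈ Z → i ∈ A) ∧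
  ∀ i : Fin n, ¬((i, true) ∈ Z ∧ (i, false) ∈ Z)

/-- Exponent vectors of the monomials of the Stanley space `u·K[Z]`. -/
def stanleySet {n : ℕ} (u : Fin n → ℤ) (Z : Finset (Fin n × Bool)) : Set (Fin n → ℤ) :=
  {a | ∀ i : Fin n, ((i, true) ∈ Z → u i ≤ a i) ∧ ((i, false) ∈ Z → a i ≤ u i) ∧
      ((i, true) ∉ Z → (i, false) ∉ Z → a i = u i)}

/-- The family of Stanley spaces `u i · K[Z i]` is a Stanley decomposition of the
monomial `K`-vector space whose monomials have exponent vectors in `M`. -/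
def IsStanleyDecompOn {n : ℕ} (A : Finset (Fin n)) (M : Set (Fin n → ℤ)) {ι : Type}
    (u : ι → Fin n → ℤ) (Z : ι → Finset (Fin n × Bool)) : Prop :=
  Finite ι ∧ (∀ i, ZOk A (Z i)) ∧
  Pairwise (fun i j : ι => Disjoint (stanleySet (u i) (Z i)) (stanleySet (u j) (Z j))) ∧
  (⋃ i, stanleySet (u i) (Z i)) = M

/-- Stanley depth of the monomial `K`-space with exponent set `M` (value `⊤` for `M = ∅`). -/
noncomputable def sdepth {n : ℕ} (A : Finset (Fin n)) (M : Set (Fin n → ℤ)) : ℕ∞ :=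
  sSup {k : ℕ∞ | ∃ (r : ℕ) (u : Fin r → Fin n → ℤ) (Z : Fin r → Finset (Fin n × Bool)),
    IsStanleyDecompOn A M u Z ∧ ∀ i, k ≤ ((Z i).card : ℕ∞)}

/-- The exponent vector of `f = ∏_{j ∈ A} x_j`. -/
def fVec {n : ℕ} (A : Finset (Fin n)) : Fin n → ℤ := fun i => if i ∈ A then 1 else 0

/-- Localization at `f` of a monomial ideal (given by its set of exponent vectors). -/
def locSet {n : ℕ} (A : Finset (Fin n)) (M : Set (Fin n → ℤ)) : Set (Fin n → ℤ) :=
  {b ∈ SfMon A | ∃ k : ℕ, b + (k : ℤ) • fVec A ∈ M}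

/-- `|a| = Σ_i |a_i|`, the degree used for the Hilbert series. -/
def degAbs {n : ℕ} (a : Fin n → ℤ) : ℕ := ∑ i, (a i).natAbs

/-- The Hilbert series `H_M(t) = Σ_d H(M,d) t^d`, `H(M,d) = #{a ∈ M : |a| = d}`, of the
`ℤⁿ`-graded `K`-vector space with monomial exponent set `M`. -/
noncomputable def hilbSeries {n : ℕ} (M : Set (Fin n → ℤ)) : PowerSeries ℚ :=
  PowerSeries.mk fun d => (({a ∈ M | degAbs a = d}).ncard : ℚ)

/-- A prime filtration `J = N 0 ⊂ N 1 ⊂ … ⊂ N r = I` of `I/J` by monomial ideals of `S_f`,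
with `i`-th factor isomorphic, as a `ℤⁿ`-graded module, to `(S_f/P_{B i})(-a i)`, where
`P_B` is the monomial prime ideal generated by the variables `x j`, `j ∈ B`. -/
def IsPrimeFiltration {n : ℕ} (A : Finset (Fin n)) (J I : Set (Fin n → ℤ)) (r : ℕ)
    (N : Fin (r + 1) → Set (Fin n → ℤ)) (B : Fin r → Finset (Fin n))
    (a : Fin r → Fin n → ℤ) : Prop :=
  N 0 = J ∧ N (Fin.last r) = I ∧
  (∀ i : Fin (r + 1), IsMonomialIdeal A (N i)) ∧
  (∀ i : Fin r, N i.castSucc ⊂ N i.succ) ∧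
  (∀ i : Fin r, ∀ j ∈ A, j ∉ B i) ∧
  (∀ i : Fin r, ∀ j, 0 ≤ a i j) ∧
  (∀ i : Fin r, ∀ j ∈ A, a i j = 0) ∧
  (∀ i : Fin r, N i.succ \ N i.castSucc =
    {b | ∃ c ∈ SfMon A, (∀ j ∈ B i, c j = 0) ∧ b = a i + c})

/-- `fdepth` of `I/J` (value `⊤` for `I = J`); `dim S_f/P_B = n - |B|`. -/
noncomputable def fdepth {n : ℕ} (A : Finset (Fin n)) (J I : Set (Fin n → ℤ)) : ℕ∞ :=
  sSup {k : ℕ∞ | ∃ (r : ℕ) (N : Fin (r + 1) → Set (Fin n → ℤ)) (B : Fin r → Finset (Fin n))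
      (a : Fin r → Fin n → ℤ), IsPrimeFiltration A J I r N B a ∧
      ∀ i, k ≤ ((n - (B i).card : ℕ) : ℕ∞)}

/-- The set of exponent vectors of the monomials of the colon ideal `(J :_{S_f} I)`,
which is the annihilator of `I/J`. -/
def colonSet {n : ℕ} (A : Finset (Fin n)) (I J : Set (Fin n → ℤ)) : Set (Fin n → ℤ) :=
  {c ∈ SfMon A | ∀ a ∈ I, a + c ∈ J}

/-- The monomial prime `P_B·S_f` contains the monomial ideal with exponent set `Q`. -/
def primeContainsIdeal {n : ℕ} (B : Finset (Fin n)) (Q : Set (Fin n → ℤ)) : Prop :=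
  ∀ c ∈ Q, ∃ j ∈ B, 1 ≤ c j

/-- `P_B·S_f` is a minimal prime ideal of the module `I/J`, i.e. a prime of `S_f`
(so `B ∩ A = ∅`) minimal among those containing `ann(I/J) = (J : I)`. -/
def IsMinimalPrimeOf {n : ℕ} (A B : Finset (Fin n)) (I J : Set (Fin n → ℤ)) : Prop :=
  (∀ j ∈ A, j ∉ B) ∧ primeContainsIdeal B (colonSet A I J) ∧
  ∀ B' ⊆ B, primeContainsIdeal B' (colonSet A I J) → B' = B

/-- Exponent vectors of the monomials of `S' = K[x_i : i ∉ A] ⊆ S`. -/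
def SpMon {n : ℕ} (A : Finset (Fin n)) : Set (Fin n → ℤ) :=
  {a | ∀ i : Fin n, 0 ≤ a i ∧ (i ∈ A → a i = 0)}

namespace SdAux

variable {n : ℕ}

lemma self_mem_stanleySet (u : Fin n → ℤ) (Z : Finset (Fin n × Bool)) :
    u ∈ stanleySet u Z :=
  fun _ => ⟨fun _ => le_refl _, fun _ => le_refl _, fun _ _ => rfl⟩

def sing (n : ℕ) (i : Fin n) : Fin n → ℤ := Pi.single i 1

lemma sing_same (i : Fin n) : sing n i i = 1 := Pi.single_eq_same (M := fun _ : Fin n => ℤ) i 1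

lemma sing_ne {i j : Fin n} (hj : j ≠ i) : sing n i j = 0 := Pi.single_eq_of_ne (M := fun _ : Fin n => ℤ) hj 1

/-- projection killing the `A`-coordinates -/
def pj (A : Finset (Fin n)) (b : Fin n → ℤ) : Fin n → ℤ := fun i => if i ∈ A then 0 else b i

lemma mem_loc_iff (A : Finset (Fin n)) (I' : Set (Fin n → ℤ)) (hI' : I' ⊆ SpMon A)
    (hI'c : ∀ a ∈ I', ∀ c ∈ SpMon A, a + c ∈ I') (b : Fin n → ℤ) :
    (∃ a ∈ I', ∃ c ∈ SfMon A, b = a + c) ↔ b ∈ SfMon A ∧ pj A b ∈ I' := by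
  constructor
  · rintro ⟨a, ha, c, hc, rfl⟩
    have haS := hI' ha
    simp only [SpMon, Set.mem_setOf_eq] at haS
    simp only [SfMon, Set.mem_setOf_eq] at hc
    constructor
    · intro j hj
      have h1 := (haS j).1
      have h2 := hc j hj
      simpa using add_nonneg h1 h2
    · have he : pj A (a + c) = a + fun i => if i ∈ A then 0 else c i := by
        funext j
        by_cases hj : j ∈ A
        · simp [pj, hj, (haS j).2 hj]
        · simp [pj, hj]
      rw [he]
      refine hI'c a ha _ (fun j => ?_)
      by_cases hj : j ∈ A
      · simp [hj]
      · simp [hj, hc j hj]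
  · rintro ⟨hbS, hb⟩
    simp only [SfMon, Set.mem_setOf_eq] at hbS
    refine ⟨pj A b, hb, fun i => if i ∈ A then b i else 0, fun j hj => ?_, ?_⟩
    · simp [hj]
    · funext j
      by_cases hj : j ∈ A <;> simp [pj, hj]

/-- nonnegative vectors supported in `s` -/
def Supp (s : Finset (Fin n)) : Set (Fin n → ℤ) := {a | ∀ i, 0 ≤ a i ∧ (i ∉ s → a i = 0)}

/-- upward closed set of vectors supported in `s` -/
def UpC (s : Finset (Fin n)) (M : Set (Fin n → ℤ)) : Prop :=
  M ⊆ Supp s ∧ ∀ a ∈ M, ∀ c ∈ Supp s, a + c ∈ M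

def slice (i : Fin n) (d : ℕ) (M : Set (Fin n → ℤ)) : Set (Fin n → ℤ) :=
  {a | a i = 0 ∧ a + (d : ℤ) • sing n i ∈ M}

lemma add_single_apply_ne (a : Fin n → ℤ) (d : ℤ) {i j : Fin n} (hj : j ≠ i) :
    (a + d • sing n i) j = a j := by
  simp [sing_ne hj]

lemma add_single_apply_same (a : Fin n → ℤ) (d : ℤ) (i : Fin n) :
    (a + d • sing n i) i = a i + d := by
  simp [sing_same]

lemma single_mem_Supp {i : Fin n} {t : Finset (Fin n)} (hi : i ∈ t) :
    sing n i ∈ Supp t := by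
  intro j
  rcases eq_or_ne j i with rfl | hj
  · simp [sing_same, hi]
  · simp [sing_ne hj]

lemma upc_slice {i : Fin n} {t : Finset (Fin n)} (hit : i ∉ t) {M : Set (Fin n → ℤ)}
    (hM : UpC (insert i t) M) (d : ℕ) : UpC t (slice i d M) := by
  constructor
  · rintro a ⟨hai, haM⟩ j
    have h1 := hM.1 haM j
    rcases eq_or_ne j i with rfl | hj
    · exact ⟨le_of_eq hai.symm, fun _ => hai⟩
    · rw [add_single_apply_ne a (d:ℤ) hj] at h1
      refine ⟨h1.1, fun hjt => h1.2 ?_⟩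
      simp [Finset.mem_insert, hj, hjt]
  · rintro a ⟨hai, haM⟩ c hc
    have hc' : c ∈ Supp (insert i t) := by
      intro j
      exact ⟨(hc j).1, fun hj => (hc j).2 fun hjt => hj (Finset.mem_insert_of_mem hjt)⟩
    have hci : c i = 0 := (hc i).2 hit
    refine ⟨by simp [Pi.add_apply, hai, hci], ?_⟩
    have := hM.2 _ haM c hc'
    have he : a + (d : ℤ) • sing n i + c = a + c + (d : ℤ) • sing n i := by
      abel
    rwa [he] at this

lemma slice_mono {i : Fin n} {t : Finset (Fin n)} {M : Set (Fin n → ℤ)}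
    (hM : UpC (insert i t) M) {d d' : ℕ} (h : d ≤ d') :
    slice i d M ⊆ slice i d' M := by
  induction d' , h using Nat.le_induction with
  | base => exact fun a ha => ha
  | succ m hm ih =>
      intro a ha
      have ha' := ih ha
      refine ⟨ha'.1, ?_⟩
      have := hM.2 _ ha'.2 _ (single_mem_Supp (Finset.mem_insert_self i t))
      have he : a + (m : ℤ) • sing n i + sing n i
          = a + ((m + 1 : ℕ) : ℤ) • sing n i := by
        push_cast
        rw [add_smul, one_smul]
        abel
      rwa [he] at this

lemma slice_stab (i : Fin n) (t : Finset (Fin n)) (hit : i ∉ t) (M : Set (Fin n → ℤ))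
    (hM : UpC (insert i t) M) : ∃ D, ∀ d, D ≤ d → slice i d M = slice i D M := by
  by_contra hcon
  push_neg at hcon
  have key : ∀ D : ℕ, ∃ p : ℕ × (Fin n → ℤ),
      D < p.1 ∧ p.2 ∈ slice i p.1 M ∧ p.2 ∉ slice i D M := by
    intro D
    obtain ⟨d, hDd, hne⟩ := hcon D
    have hsub : slice i D M ⊆ slice i d M := slice_mono hM hDd
    have hex : ∃ a, a ∈ slice i d M ∧ a ∉ slice i D M := by
      by_contra h
      push_neg at h
      exact hne (Set.Subset.antisymm h hsub)
    obtain ⟨a, ha, hna⟩ := hex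
    have hlt : D < d := lt_of_le_of_ne hDd (by rintro rfl; exact hna ha)
    exact ⟨(d, a), hlt, ha, hna⟩
  choose F hF1 hF2 hF3 using key
  let g : ℕ → ℕ × (Fin n → ℤ) := fun k => Nat.rec (F 0) (fun _ p => F p.1) k
  have hgs : ∀ k, g (k + 1) = F (g k).1 := fun k => rfl
  have hmono : StrictMono (fun k => (g k).1) := by
    apply strictMono_nat_of_lt_succ
    intro k
    have := hF1 (g k).1
    rw [← hgs k] at this
    exact this
  have hin : ∀ k, (g k).2 ∈ slice i (g k).1 M := by
    intro k
    cases k with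
    | zero => exact hF2 0
    | succ m => rw [hgs m]; exact hF2 (g m).1
  have hnotin : ∀ k, (g (k + 1)).2 ∉ slice i (g k).1 M := by
    intro k
    rw [hgs k]
    exact hF3 (g k).1
  have hsupp : ∀ k, (g k).2 ∈ Supp t := fun k => (upc_slice hit hM _).1 (hin k)
  have hwo : ∀ j : Fin n, IsWellOrder ℕ (· < ·) := fun _ => inferInstance
  have hPWO : @WellQuasiOrdered (Fin n → ℕ) (· ≤ ·) := wellQuasiOrdered_le
  obtain ⟨m, l, hml, hle⟩ := hPWO (fun k j => ((g k).2 j).toNat)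
  have hle' : ∀ j : Fin n, (g m).2 j ≤ (g l).2 j := by
    intro j
    have h1 : ((g m).2 j).toNat ≤ ((g l).2 j).toNat := hle j
    have h2 := ((hsupp m) j).1
    have h3 := ((hsupp l) j).1
    omega
  have hcS : (g l).2 - (g m).2 ∈ Supp t := by
    intro j
    constructor
    · have := hle' j
      simp only [Pi.sub_apply]
      omega
    · intro hj
      have h2 := ((hsupp m) j).2 hj
      have h3 := ((hsupp l) j).2 hj
      simp only [Pi.sub_apply, h2, h3, sub_zero]
  have hgl : (g l).2 = (g m).2 + ((g l).2 - (g m).2) := by abel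
  have h5 : (g l).2 ∈ slice i ((g m).1) M := by
    rw [hgl]
    exact (upc_slice hit hM _).2 _ (hin m) _ hcS
  have h6 : (g m).1 ≤ (g (l - 1)).1 := hmono.monotone (Nat.le_pred_of_lt hml)
  have h7 : (g l).2 ∈ slice i ((g (l - 1)).1) M := slice_mono hM h6 h5
  have h8 := hnotin (l - 1)
  have hl : 0 < l := lt_of_le_of_lt (Nat.zero_le m) hml
  rw [Nat.sub_add_cancel hl] at h8
  exact h8 h7

lemma zok_empty_of_true {Z : Finset (Fin n × Bool)} (h : ∀ p ∈ Z, p.2 = true) :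
    ZOk (∅ : Finset (Fin n)) Z := by
  constructor
  · intro i hi
    have := h _ hi
    simp at this
  · rintro i ⟨-, hi⟩
    have := h _ hi
    simp at this

lemma reindex {A : Finset (Fin n)} {M : Set (Fin n → ℤ)} {ι : Type}
    {u : ι → Fin n → ℤ} {Z : ι → Finset (Fin n × Bool)}
    (h : IsStanleyDecompOn A M u Z) :
    ∃ (r : ℕ) (u' : Fin r → Fin n → ℤ) (Z' : Fin r → Finset (Fin n × Bool)),
      IsStanleyDecompOn A M u' Z' ∧ ∀ j, ∃ x, Z' j = Z x := by
  have : Finite ι := h.1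
  have : Fintype ι := Fintype.ofFinite ι
  set e := (Fintype.equivFin ι).symm
  refine ⟨Fintype.card ι, u ∘ e, Z ∘ e, ⟨inferInstance, fun j => h.2.1 _, ?_, ?_⟩,
    fun j => ⟨_, rfl⟩⟩
  · exact fun a b hab => h.2.2.1 (e.injective.ne hab)
  · rw [← h.2.2.2]
    exact e.surjective.iUnion_comp (fun x => stanleySet (u x) (Z x))

lemma stanley_shift (i : Fin n) (u : Fin n → ℤ) (Z : Finset (Fin n × Bool))
    (hZ : ∀ p ∈ Z, p.1 ≠ i) (hui : u i = 0) (d : ℤ) :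
    stanleySet (u + d • sing n i) Z
      = {b | b i = d ∧ Function.update b i 0 ∈ stanleySet u Z} := by
  have hti : (i, true) ∉ Z := fun h => hZ _ h rfl
  have hfi : (i, false) ∉ Z := fun h => hZ _ h rfl
  ext b
  simp only [stanleySet, Set.mem_setOf_eq]
  constructor
  · intro h
    have hbi := (h i).2.2 hti hfi
    rw [add_single_apply_same, hui, zero_add] at hbi
    refine ⟨hbi, fun j => ?_⟩
    rcases eq_or_ne j i with rfl | hj
    · exact ⟨fun hm => absurd hm hti, fun hm => absurd hm hfi,
        fun _ _ => by rw [Function.update_self, hui]⟩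
    · have hj' : Function.update b i 0 j = b j := Function.update_of_ne hj _ _
      have huj := add_single_apply_ne u d hj
      refine ⟨fun hm => ?_, fun hm => ?_, fun hm hm2 => ?_⟩
      · rw [hj', ← huj]; exact (h j).1 hm
      · rw [hj', ← huj]; exact (h j).2.1 hm
      · rw [hj', ← huj]; exact (h j).2.2 hm hm2
  · rintro ⟨hbi, h⟩ j
    rcases eq_or_ne j i with rfl | hj
    · refine ⟨fun hm => absurd hm hti, fun hm => absurd hm hfi, fun _ _ => ?_⟩
      rw [add_single_apply_same, hui, zero_add, hbi]
    · have hj' : Function.update b i 0 j = b j := Function.update_of_ne hj _ _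
      rw [add_single_apply_ne u d hj]
      refine ⟨fun hm => ?_, fun hm => ?_, fun hm hm2 => ?_⟩
      · have := (h j).1 hm; rwa [hj'] at this
      · have := (h j).2.1 hm; rwa [hj'] at this
      · have := (h j).2.2 hm hm2; rwa [hj'] at this

lemma stanley_shift_up (i : Fin n) (u : Fin n → ℤ) (Z : Finset (Fin n × Bool))
    (hZ : ∀ p ∈ Z, p.1 ≠ i) (hui : u i = 0) (d : ℤ) :
    stanleySet (u + d • sing n i) (insert (i, true) Z)
      = {b | d ≤ b i ∧ Function.update b i 0 ∈ stanleySet u Z} := by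
  have hti0 : (i, true) ∉ Z := fun h => hZ _ h rfl
  have hfi0 : (i, false) ∉ Z := fun h => hZ _ h rfl
  have hti : (i, true) ∈ insert (i, true) Z := Finset.mem_insert_self _ _
  have hfi : (i, false) ∉ insert (i, true) Z := by
    intro h
    rcases Finset.mem_insert.1 h with h | h
    · simp at h
    · exact hfi0 h
  have hmem : ∀ (j : Fin n) (c : Bool), j ≠ i →
      ((j, c) ∈ insert (i, true) Z ↔ (j, c) ∈ Z) := by
    intro j c hj
    rw [Finset.mem_insert]
    constructor
    · rintro (h | h)
      · exact absurd (congrArg Prod.fst h) hj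
      · exact h
    · exact Or.inr
  ext b
  simp only [stanleySet, Set.mem_setOf_eq]
  constructor
  · intro h
    have hbi := (h i).1 hti
    rw [add_single_apply_same, hui, zero_add] at hbi
    refine ⟨hbi, fun j => ?_⟩
    rcases eq_or_ne j i with rfl | hj
    · exact ⟨fun hm => absurd hm hti0, fun hm => absurd hm hfi0,
        fun _ _ => by rw [Function.update_self, hui]⟩
    · have hj' : Function.update b i 0 j = b j := Function.update_of_ne hj _ _
      have huj := add_single_apply_ne u d hj
      refine ⟨fun hm => ?_, fun hm => ?_, fun hm hm2 => ?_⟩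
      · rw [hj', ← huj]; exact (h j).1 ((hmem j true hj).2 hm)
      · rw [hj', ← huj]; exact (h j).2.1 ((hmem j false hj).2 hm)
      · rw [hj', ← huj]
        exact (h j).2.2 (fun hmm => hm ((hmem j true hj).1 hmm))
          (fun hmm => hm2 ((hmem j false hj).1 hmm))
  · rintro ⟨hbi, h⟩ j
    rcases eq_or_ne j i with rfl | hj
    · refine ⟨fun _ => ?_, fun hm => absurd hm hfi, fun hm _ => absurd hti hm⟩
      rw [add_single_apply_same, hui, zero_add]
      exact hbi
    · have hj' : Function.update b i 0 j = b j := Function.update_of_ne hj _ _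
      rw [add_single_apply_ne u d hj]
      refine ⟨fun hm => ?_, fun hm => ?_, fun hm hm2 => ?_⟩
      · have := (h j).1 ((hmem j true hj).1 hm); rwa [hj'] at this
      · have := (h j).2.1 ((hmem j false hj).1 hm); rwa [hj'] at this
      · have := (h j).2.2 (fun hmm => hm ((hmem j true hj).2 hmm))
          (fun hmm => hm2 ((hmem j false hj).2 hmm))
        rwa [hj'] at this

lemma exists_decomp (s : Finset (Fin n)) :
    ∀ I J : Set (Fin n → ℤ), UpC s I → UpC s J →
    ∃ (r : ℕ) (u : Fin r → Fin n → ℤ) (Z : Fin r → Finset (Fin n × Bool)),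
      IsStanleyDecompOn (∅ : Finset (Fin n)) (I \ J) u Z ∧
        ∀ k, ∀ p ∈ Z k, p.2 = true ∧ p.1 ∈ s := by
  induction s using Finset.induction_on with
  | empty =>
    intro I J hI hJ
    have hsub : I \ J ⊆ {(0 : Fin n → ℤ)} := by
      intro a ha
      have h1 := hI.1 ha.1
      have h2 : a = 0 := funext fun j => (h1 j).2 (Finset.notMem_empty j)
      rw [Set.mem_singleton_iff]
      exact h2
    have hstan : stanleySet (0 : Fin n → ℤ) ∅ = {(0 : Fin n → ℤ)} := by
      ext a
      rw [Set.mem_singleton_iff]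
      constructor
      · intro h
        exact funext fun j => (h j).2.2 (Finset.notMem_empty _) (Finset.notMem_empty _)
      · rintro rfl
        exact self_mem_stanleySet _ _
    by_cases h0 : (0 : Fin n → ℤ) ∈ I \ J
    · refine ⟨1, fun _ => 0, fun _ => ∅, ⟨Finite.of_fintype _,
        fun _ => zok_empty_of_true (by simp), ?_, ?_⟩, by simp⟩
      · intro a b hab
        exact absurd (Subsingleton.elim a b) hab
      · apply Set.Subset.antisymm
        · intro a ha
          obtain ⟨k, hk⟩ := Set.mem_iUnion.1 ha
          have hk' : a ∈ stanleySet (0 : Fin n → ℤ) ∅ := hk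
          rw [hstan, Set.mem_singleton_iff] at hk'
          rwa [hk']
        · intro a ha
          have h2 : a ∈ stanleySet (0 : Fin n → ℤ) ∅ := by
            rw [hstan]
            exact hsub ha
          exact Set.mem_iUnion.2 ⟨0, h2⟩
    · refine ⟨0, Fin.elim0, Fin.elim0, ⟨Finite.of_fintype _, fun k => k.elim0, ?_, ?_⟩,
        fun k => k.elim0⟩
      · intro a
        exact a.elim0
      · apply Set.Subset.antisymm
        · intro a ha
          obtain ⟨k, _⟩ := Set.mem_iUnion.1 ha
          exact k.elim0
        · intro a ha
          exact absurd ((Set.mem_singleton_iff.1 (hsub ha)) ▸ ha) h0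
  | @insert i t hit ih =>
    intro I J hI hJ
    obtain ⟨DI, hDI⟩ := slice_stab i t hit I hI
    obtain ⟨DJ, hDJ⟩ := slice_stab i t hit J hJ
    obtain ⟨D, hD1, hD2⟩ : ∃ D, DI ≤ D ∧ DJ ≤ D := ⟨max DI DJ, le_max_left _ _, le_max_right _ _⟩
    have hstabI : ∀ d, D ≤ d → slice i d I = slice i D I := fun d hd => by
      rw [hDI d (le_trans hD1 hd), hDI D hD1]
    have hstabJ : ∀ d, D ≤ d → slice i d J = slice i D J := fun d hd => by
      rw [hDJ d (le_trans hD2 hd), hDJ D hD2]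
    have hstab2 : ∀ d, D ≤ d →
        slice i d I \ slice i d J = slice i D I \ slice i D J := by
      intro d hd
      rw [hstabI d hd, hstabJ d hd]
    have hIH : ∀ d : ℕ, ∃ (r : ℕ) (u : Fin r → Fin n → ℤ) (Z : Fin r → Finset (Fin n × Bool)),
        IsStanleyDecompOn (∅ : Finset (Fin n)) (slice i d I \ slice i d J) u Z ∧
          ∀ k, ∀ p ∈ Z k, p.2 = true ∧ p.1 ∈ t :=
      fun d => ih _ _ (upc_slice hit hI d) (upc_slice hit hJ d)
    choose r u Z hSD hvar using hIH
    have huni : ∀ (d : ℕ) (k : Fin (r d)),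
        stanleySet (u d k) (Z d k) ⊆ slice i d I \ slice i d J := by
      intro d k b hb
      rw [← (hSD d).2.2.2]
      exact Set.mem_iUnion.2 ⟨k, hb⟩
    have hu0 : ∀ (d : ℕ) (k : Fin (r d)), u d k i = 0 :=
      fun d k => (huni d k (self_mem_stanleySet _ _)).1.1
    have hZne : ∀ (d : ℕ) (k : Fin (r d)), ∀ p ∈ Z d k, p.1 ≠ i := by
      intro d k p hp he
      exact hit (he ▸ (hvar d k p hp).2)
    have hpieceLT : ∀ (d : ℕ) (k : Fin (r d)),
        stanleySet (u d k + (d : ℤ) • sing n i) (Z d k)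
          = {b | b i = (d : ℤ) ∧ Function.update b i 0 ∈ stanleySet (u d k) (Z d k)} :=
      fun d k => stanley_shift i _ _ (hZne d k) (hu0 d k) _
    have hpieceD : ∀ (d : ℕ) (k : Fin (r d)),
        stanleySet (u d k + (d : ℤ) • sing n i) (insert (i, true) (Z d k))
          = {b | (d : ℤ) ≤ b i ∧ Function.update b i 0 ∈ stanleySet (u d k) (Z d k)} :=
      fun d k => stanley_shift_up i _ _ (hZne d k) (hu0 d k) _
    have hupd : ∀ (b : Fin n → ℤ) (d : ℕ), b i = (d : ℤ) →
        Function.update b i 0 + (d : ℤ) • sing n i = b := by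
      intro b d hb
      funext j
      rcases eq_or_ne j i with rfl | hj
      · rw [add_single_apply_same, Function.update_self, zero_add]
        exact hb.symm
      · rw [add_single_apply_ne _ _ hj, Function.update_of_ne hj]
    have hmem2 : ∀ (b : Fin n → ℤ) (d : ℕ), b i = (d : ℤ) →
        (b ∈ I \ J ↔ Function.update b i 0 ∈ slice i d I \ slice i d J) := by
      intro b d hb
      have h1 : Function.update b i 0 i = (0 : ℤ) := Function.update_self _ _ _
      constructor
      · rintro ⟨hbI, hbJ⟩
        refine ⟨⟨h1, ?_⟩, fun hc => hbJ ?_⟩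
        · rw [hupd b d hb]
          exact hbI
        · have h2 := hc.2
          rwa [hupd b d hb] at h2
      · rintro ⟨hsI, hsJ⟩
        refine ⟨?_, fun hb' => hsJ ⟨h1, ?_⟩⟩
        · have h2 := hsI.2
          rwa [hupd b d hb] at h2
        · rw [hupd b d hb]
          exact hb'
    have hmain : IsStanleyDecompOn (∅ : Finset (Fin n)) (I \ J)
        (fun x : (d : Fin (D + 1)) × Fin (r (d : ℕ)) => u (x.1 : ℕ) x.2 + ((x.1 : ℕ) : ℤ) • sing n i)
        (fun x : (d : Fin (D + 1)) × Fin (r (d : ℕ)) =>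
          if (x.1 : ℕ) = D then insert (i, true) (Z (x.1 : ℕ) x.2) else Z (x.1 : ℕ) x.2) := by
      refine ⟨Finite.of_fintype _, ?_, ?_, ?_⟩
      · intro x
        apply zok_empty_of_true
        intro p hp
        dsimp only at hp
        split_ifs at hp with hx
        · rcases Finset.mem_insert.1 hp with rfl | hp2
          · rfl
          · exact (hvar _ x.2 p hp2).1
        · exact (hvar _ x.2 p hp).1
      · intro x y hxy
        rw [Set.disjoint_left]
        intro b hbx hby
        dsimp only at hbx hby
        by_cases hd : x.1 = y.1
        · have hveq : (x.1 : ℕ) = (y.1 : ℕ) := by rw [hd]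
          have h2 : Function.update b i 0 ∈ stanleySet (u (x.1 : ℕ) x.2) (Z (x.1 : ℕ) x.2) := by
            by_cases hx : (x.1 : ℕ) = D
            · rw [if_pos hx, hpieceD] at hbx
              exact hbx.2
            · rw [if_neg hx, hpieceLT] at hbx
              exact hbx.2
          have h3 : Function.update b i 0 ∈ stanleySet (u (y.1 : ℕ) y.2) (Z (y.1 : ℕ) y.2) := by
            by_cases hy : (y.1 : ℕ) = D
            · rw [if_pos hy, hpieceD] at hby
              exact hby.2
            · rw [if_neg hy, hpieceLT] at hby
              exact hby.2
          obtain ⟨dx, kx⟩ := x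
          obtain ⟨dy, ky⟩ := y
          dsimp only at hd h2 h3
          subst hd
          have hk : kx ≠ ky := by
            intro h
            exact hxy (by rw [h])
          exact Set.disjoint_left.1 ((hSD (dx : ℕ)).2.2.1 hk) h2 h3
        · have hv : (x.1 : ℕ) ≠ (y.1 : ℕ) := fun h => hd (Fin.val_injective h)
          have hxle : (x.1 : ℕ) ≤ D := Fin.is_le x.1
          have hyle : (y.1 : ℕ) ≤ D := Fin.is_le y.1
          by_cases hx : (x.1 : ℕ) = D <;> by_cases hy : (y.1 : ℕ) = D
          · exact hv (hx.trans hy.symm)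
          · rw [if_pos hx, hpieceD] at hbx
            rw [if_neg hy, hpieceLT] at hby
            have h1 : ((x.1 : ℕ) : ℤ) ≤ b i := hbx.1
            have h2 : b i = ((y.1 : ℕ) : ℤ) := hby.1
            omega
          · rw [if_neg hx, hpieceLT] at hbx
            rw [if_pos hy, hpieceD] at hby
            have h1 : b i = ((x.1 : ℕ) : ℤ) := hbx.1
            have h2 : ((y.1 : ℕ) : ℤ) ≤ b i := hby.1
            omega
          · rw [if_neg hx, hpieceLT] at hbx
            rw [if_neg hy, hpieceLT] at hby
            have h1 : b i = ((x.1 : ℕ) : ℤ) := hbx.1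
            have h2 : b i = ((y.1 : ℕ) : ℤ) := hby.1
            omega
      · apply Set.Subset.antisymm
        · intro b hb
          obtain ⟨x, hx⟩ := Set.mem_iUnion.1 hb
          dsimp only at hx
          by_cases hcx : (x.1 : ℕ) = D
          · rw [if_pos hcx, hpieceD] at hx
            have hbi0 : (0 : ℤ) ≤ b i := le_trans (Int.natCast_nonneg _) hx.1
            have hbd : b i = (((b i).toNat : ℕ) : ℤ) := (Int.toNat_of_nonneg hbi0).symm
            have hx1 := hx.1
            have hDd : D ≤ (b i).toNat := by omega
            have hm : Function.update b i 0 ∈ slice i (x.1 : ℕ) I \ slice i (x.1 : ℕ) J :=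
              huni _ x.2 hx.2
            rw [hcx] at hm
            rw [← hstab2 ((b i).toNat) hDd] at hm
            exact (hmem2 b _ hbd).2 hm
          · rw [if_neg hcx, hpieceLT] at hx
            exact (hmem2 b _ hx.1).2 (huni _ x.2 hx.2)
        · intro b hb
          have hbi0 : (0 : ℤ) ≤ b i := (hI.1 hb.1 i).1
          have hbd : b i = (((b i).toNat : ℕ) : ℤ) := (Int.toNat_of_nonneg hbi0).symm
          have hsl := (hmem2 b _ hbd).1 hb
          have hd1le : min ((b i).toNat) D ≤ D := min_le_right _ _
          have hsl1 : Function.update b i 0 ∈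
              slice i (min ((b i).toNat) D) I \ slice i (min ((b i).toNat) D) J := by
            rcases le_or_gt ((b i).toNat) D with hle | hlt
            · rw [min_eq_left hle]
              exact hsl
            · rw [min_eq_right (le_of_lt hlt)]
              rw [hstab2 _ (le_of_lt hlt)] at hsl
              exact hsl
          rw [← (hSD (min ((b i).toNat) D)).2.2.2] at hsl1
          obtain ⟨k, hk⟩ := Set.mem_iUnion.1 hsl1
          refine Set.mem_iUnion.2 ⟨⟨⟨min ((b i).toNat) D, Nat.lt_succ_of_le hd1le⟩, k⟩, ?_⟩
          dsimp only
          by_cases hcd : min ((b i).toNat) D = D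
          · rw [if_pos hcd, hpieceD]
            refine ⟨?_, hk⟩
            omega
          · rw [if_neg hcd, hpieceLT]
            refine ⟨?_, hk⟩
            omega
    obtain ⟨r', u', Z', hdec, hzz⟩ := reindex hmain
    refine ⟨r', u', Z', hdec, ?_⟩
    intro k p hp
    obtain ⟨x, hx⟩ := hzz k
    rw [hx] at hp
    split_ifs at hp with hc
    · rcases Finset.mem_insert.1 hp with rfl | hp2
      · exact ⟨rfl, Finset.mem_insert_self i t⟩
      · exact ⟨(hvar _ x.2 p hp2).1, Finset.mem_insert_of_mem (hvar _ x.2 p hp2).2⟩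
    · exact ⟨(hvar _ x.2 p hp).1, Finset.mem_insert_of_mem (hvar _ x.2 p hp).2⟩

lemma sSup_mem_of_downward {S : Set ℕ∞} (hne : S.Nonempty)
    (hdc : ∀ k k' : ℕ∞, k ≤ k' → k' ∈ S → k ∈ S) (htop : sSup S ≠ ⊤) : sSup S ∈ S := by
  obtain ⟨m, hm⟩ := WithTop.ne_top_iff_exists.1 htop
  rcases eq_or_ne m 0 with rfl | hm0
  · obtain ⟨k, hk⟩ := hne
    have hk0 : k ≤ sSup S := le_sSup hk
    have h0 : (0 : ℕ∞) ∈ S := hdc 0 k zero_le hk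
    rw [← hm]
    exact h0
  · have h1 : ((m - 1 : ℕ) : ℕ∞) < sSup S := by
      rw [← hm]
      exact ENat.coe_lt_coe.2 (Nat.sub_lt (Nat.pos_of_ne_zero hm0) one_pos)
    obtain ⟨k, hk, hlt⟩ := lt_sSup_iff.1 h1
    have hkle : k ≤ sSup S := le_sSup hk
    have hktop : k ≠ ⊤ := by
      intro h
      rw [h] at hkle
      exact htop (top_le_iff.1 hkle)
    obtain ⟨k', hk'⟩ := WithTop.ne_top_iff_exists.1 hktop
    rw [← hk'] at hk hkle hlt
    rw [← hm] at hkle ⊢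
    have h2 : m - 1 < k' := ENat.coe_lt_coe.1 hlt
    have h3 : k' ≤ m := ENat.coe_le_coe.1 hkle
    have : k' = m := by omega
    rwa [← this]

lemma lift_decomp (A : Finset (Fin n)) (M2 : Set (Fin n → ℤ)) (hM2 : M2 ⊆ SpMon A)
    (M1 : Set (Fin n → ℤ)) (hM1 : M1 = {b ∈ SfMon A | pj A b ∈ M2})
    {r : ℕ} (u : Fin r → Fin n → ℤ) (Z : Fin r → Finset (Fin n × Bool))
    (h : IsStanleyDecompOn (∅ : Finset (Fin n)) M2 u Z) (k : ℕ∞)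
    (hk : ∀ x, k ≤ ((Z x).card : ℕ∞)) :
    ∃ (r' : ℕ) (u' : Fin r' → Fin n → ℤ) (Z' : Fin r' → Finset (Fin n × Bool)),
      IsStanleyDecompOn A M1 u' Z' ∧ ∀ x, k + (A.card : ℕ∞) ≤ ((Z' x).card : ℕ∞) := by
  classical
  have hsub : ∀ x, stanleySet (u x) (Z x) ⊆ M2 := by
    intro x b hb
    rw [← h.2.2.2]
    exact Set.mem_iUnion.2 ⟨x, hb⟩
  have hself : ∀ x, u x ∈ M2 := fun x => hsub x (self_mem_stanleySet _ _)
  have hnof : ∀ (x : Fin r) (j : Fin n), (j, false) ∉ Z x := by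
    intro x j hj
    have := (h.2.1 x).1 j hj
    simp at this
  have hnotA : ∀ x, ∀ j ∈ A, (j, true) ∉ Z x := by
    intro x j hj hmem
    have hu0 : u x j = 0 := (hM2 (hself x) j).2 hj
    have h1 : u x + sing n j ∈ stanleySet (u x) (Z x) := by
      intro j'
      rcases eq_or_ne j' j with rfl | hj'
      · refine ⟨fun _ => ?_, fun hm => absurd hm (hnof x j'), fun hm _ => absurd hmem hm⟩
        have he : (u x + sing n j') j' = u x j' + 1 := by rw [Pi.add_apply, sing_same]
        omega
      · have he : (u x + sing n j) j' = u x j' := by rw [Pi.add_apply, sing_ne hj', add_zero]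
        exact ⟨fun _ => le_of_eq he.symm, fun _ => le_of_eq he, fun _ _ => he⟩
    have h2 := hM2 (hsub x h1) j
    have h3 : (u x + sing n j) j = u x j + 1 := by rw [Pi.add_apply, sing_same]
    have h4 := h2.2 hj
    omega
  have hmemZZ : ∀ (T : Finset (Fin n)) (j : Fin n) (bb : Bool) (x : Fin r),
      ((j, bb) ∈ Z x ∪ A.image (fun a => (a, !(decide (a ∈ T)))) ↔
        (j, bb) ∈ Z x ∨ (j ∈ A ∧ bb = !(decide (j ∈ T)))) := by
    intro T j bb x
    rw [Finset.mem_union, Finset.mem_image]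
    apply or_congr_right
    constructor
    · rintro ⟨a, ha, he⟩
      rw [Prod.mk.injEq] at he
      obtain ⟨rfl, h2⟩ := he
      exact ⟨ha, h2.symm⟩
    · rintro ⟨hj, rfl⟩
      exact ⟨j, hj, rfl⟩
  have hcard : ∀ (T : Finset (Fin n)) (x : Fin r),
      (Z x ∪ A.image (fun a => (a, !(decide (a ∈ T))))).card = (Z x).card + A.card := by
    intro T x
    have hdisj : Disjoint (Z x) (A.image fun a => (a, !(decide (a ∈ T)))) := by
      rw [Finset.disjoint_left]
      rintro ⟨j, bb⟩ hp hq
      obtain ⟨a, ha, he⟩ := Finset.mem_image.1 hq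
      rw [Prod.mk.injEq] at he
      obtain ⟨rfl, h2⟩ := he
      cases bb
      · exact hnof x a hp
      · exact hnotA x a ha hp
    rw [Finset.card_union_of_disjoint hdisj,
      Finset.card_image_of_injOn (fun a _ b _ hab => congrArg Prod.fst hab)]
  have hpiece : ∀ (x : Fin r) (T : Finset (Fin n)), T ⊆ A → ∀ b : Fin n → ℤ,
      (b ∈ stanleySet (fun j => if j ∈ A then (if j ∈ T then -1 else 0) else u x j)
        (Z x ∪ A.image (fun a => (a, !(decide (a ∈ T))))) ↔
      (pj A b ∈ stanleySet (u x) (Z x) ∧ ∀ j ∈ A, (j ∈ T → b j ≤ -1) ∧ (j ∉ T → 0 ≤ b j))) := by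
    intro x T hT b
    constructor
    · intro hb
      constructor
      · intro j
        by_cases hj : j ∈ A
        · have hu0 : u x j = 0 := (hM2 (hself x) j).2 hj
          refine ⟨fun hm => absurd hm (hnotA x j hj), fun hm => absurd hm (hnof x j),
            fun _ _ => ?_⟩
          simp [pj, hj, hu0]
        · have hpjb : pj A b j = b j := if_neg hj
          refine ⟨fun hm => ?_, fun hm => ?_, fun hm1 hm2 => ?_⟩
          · have h5 := (hb j).1 ((hmemZZ T j true x).2 (Or.inl hm))
            rw [hpjb]
            simpa [hj] using h5
          · have h5 := (hb j).2.1 ((hmemZZ T j false x).2 (Or.inl hm))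
            rw [hpjb]
            simpa [hj] using h5
          · have h5 := (hb j).2.2
              (fun hmm => hm1 (((hmemZZ T j true x).1 hmm).resolve_right (fun hc => hj hc.1)))
              (fun hmm => hm2 (((hmemZZ T j false x).1 hmm).resolve_right (fun hc => hj hc.1)))
            rw [hpjb]
            simpa [hj] using h5
      · intro j hj
        have hZt : (j, !(decide (j ∈ T))) ∈ Z x ∪ A.image (fun a => (a, !(decide (a ∈ T)))) :=
          (hmemZZ T j _ x).2 (Or.inr ⟨hj, rfl⟩)
        constructor
        · intro hjT
          have hbool : (!(decide (j ∈ T))) = false := by simp [hjT]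
          rw [hbool] at hZt
          have h5 := (hb j).2.1 hZt
          simpa [hj, hjT] using h5
        · intro hjT
          have hbool : (!(decide (j ∈ T))) = true := by simp [hjT]
          rw [hbool] at hZt
          have h5 := (hb j).1 hZt
          simpa [hj, hjT] using h5
    · rintro ⟨h1, h2⟩ j
      by_cases hj : j ∈ A
      · refine ⟨fun hm => ?_, fun hm => ?_, fun hm1 hm2 => ?_⟩
        · rcases (hmemZZ T j true x).1 hm with hc | ⟨-, hc⟩
          · exact absurd hc (hnotA x j hj)
          · have hjT : j ∉ T := by simpa using hc.symm
            have h6 := (h2 j hj).2 hjT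
            simpa [hj, hjT] using h6
        · rcases (hmemZZ T j false x).1 hm with hc | ⟨-, hc⟩
          · exact absurd hc (hnof x j)
          · have hjT : j ∈ T := by simpa using hc.symm
            have h6 := (h2 j hj).1 hjT
            simpa [hj, hjT] using h6
        · by_cases hjT : j ∈ T
          · refine absurd ?_ hm2
            have hbool : (!(decide (j ∈ T))) = false := by simp [hjT]
            have := (hmemZZ T j _ x).2 (Or.inr ⟨hj, rfl⟩)
            rwa [hbool] at this
          · refine absurd ?_ hm1
            have hbool : (!(decide (j ∈ T))) = true := by simp [hjT]
            have := (hmemZZ T j _ x).2 (Or.inr ⟨hj, rfl⟩)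
            rwa [hbool] at this
      · have hpjb : pj A b j = b j := if_neg hj
        refine ⟨fun hm => ?_, fun hm => ?_, fun hm1 hm2 => ?_⟩
        · have h5 := (h1 j).1 (((hmemZZ T j true x).1 hm).resolve_right (fun hc => hj hc.1))
          rw [hpjb] at h5
          simpa [hj] using h5
        · have h5 := (h1 j).2.1 (((hmemZZ T j false x).1 hm).resolve_right (fun hc => hj hc.1))
          rw [hpjb] at h5
          simpa [hj] using h5
        · have h5 := (h1 j).2.2 (fun hmm => hm1 ((hmemZZ T j true x).2 (Or.inl hmm)))
            (fun hmm => hm2 ((hmemZZ T j false x).2 (Or.inl hmm)))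
          rw [hpjb] at h5
          simpa [hj] using h5
  have hmain : IsStanleyDecompOn A M1
      (fun x : Fin r × {T : Finset (Fin n) // T ⊆ A} =>
        fun j => if j ∈ A then (if j ∈ x.2.val then -1 else 0) else u x.1 j)
      (fun x : Fin r × {T : Finset (Fin n) // T ⊆ A} =>
        Z x.1 ∪ A.image (fun a => (a, !(decide (a ∈ x.2.val))))) := by
    refine ⟨inferInstance, ?_, ?_, ?_⟩
    · intro x
      constructor
      · intro j hj
        rcases (hmemZZ x.2.val j false x.1).1 hj with hc | ⟨hc, -⟩
        · exact absurd hc (hnof x.1 j)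
        · exact hc
      · rintro j ⟨hjt, hjf⟩
        rcases (hmemZZ x.2.val j false x.1).1 hjf with hc | ⟨hjA, hc⟩
        · exact hnof x.1 j hc
        · rcases (hmemZZ x.2.val j true x.1).1 hjt with hc' | ⟨-, hc'⟩
          · exact hnotA x.1 j hjA hc'
          · exact absurd (hc'.trans hc.symm) (by simp)
    · intro x y hxy
      rw [Set.disjoint_left]
      intro b hbx hby
      have hb1 := (hpiece x.1 x.2.val x.2.2 b).1 hbx
      have hb2 := (hpiece y.1 y.2.val y.2.2 b).1 hby
      by_cases hT : x.2 = y.2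
      · have hx1 : x.1 ≠ y.1 := by
          intro hv
          exact hxy (Prod.ext hv hT)
        exact Set.disjoint_left.1 (h.2.2.1 hx1) hb1.1 hb2.1
      · have hTv : x.2.val ≠ y.2.val := fun hv => hT (Subtype.ext hv)
        have hex : ∃ j, (j ∈ x.2.val ∧ j ∉ y.2.val) ∨ (j ∈ y.2.val ∧ j ∉ x.2.val) := by
          by_contra hc
          push_neg at hc
          exact hTv (Finset.ext fun j => ⟨(hc j).1, (hc j).2⟩)
        obtain ⟨j, hj⟩ := hex
        rcases hj with ⟨hj1, hj2⟩ | ⟨hj1, hj2⟩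
        · have hjA : j ∈ A := x.2.2 hj1
          have ha1 := (hb1.2 j hjA).1 hj1
          have ha2 := (hb2.2 j hjA).2 hj2
          omega
        · have hjA : j ∈ A := y.2.2 hj1
          have ha1 := (hb2.2 j hjA).1 hj1
          have ha2 := (hb1.2 j hjA).2 hj2
          omega
    · rw [hM1]
      apply Set.Subset.antisymm
      · intro b hb
        obtain ⟨x, hx⟩ := Set.mem_iUnion.1 hb
        have hb1 := (hpiece x.1 x.2.val x.2.2 b).1 hx
        have hb2 : pj A b ∈ M2 := hsub x.1 hb1.1
        refine ⟨?_, hb2⟩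
        intro j hj
        have h5 := (hM2 hb2 j).1
        have h6 : pj A b j = b j := if_neg hj
        rwa [h6] at h5
      · intro b hb
        obtain ⟨hbS, hbM⟩ := hb
        rw [← h.2.2.2] at hbM
        obtain ⟨x1, hx1⟩ := Set.mem_iUnion.1 hbM
        refine Set.mem_iUnion.2
          ⟨(x1, ⟨A.filter (fun j => b j < 0), Finset.filter_subset _ _⟩), ?_⟩
        refine (hpiece x1 _ (Finset.filter_subset _ _) b).2 ⟨hx1, ?_⟩
        intro j hj
        constructor
        · intro hjT
          have := (Finset.mem_filter.1 hjT).2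
          omega
        · intro hjT
          have h7 : ¬ b j < 0 := fun hlt => hjT (Finset.mem_filter.2 ⟨hj, hlt⟩)
          omega
  obtain ⟨r', u', Z', hdec, hzz⟩ := reindex hmain
  refine ⟨r', u', Z', hdec, ?_⟩
  intro x
  obtain ⟨y, hy⟩ := hzz x
  rw [hy, hcard y.2.val y.1, Nat.cast_add]
  exact add_le_add_left (hk y.1) _

lemma restrict_decomp (A : Finset (Fin n)) (M2 M1 : Set (Fin n → ℤ)) (hM2 : M2 ⊆ SpMon A)
    (hM1 : M1 = {b ∈ SfMon A | pj A b ∈ M2}) (hne : M2.Nonempty)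
    {r : ℕ} (u : Fin r → Fin n → ℤ) (Z : Fin r → Finset (Fin n × Bool))
    (h : IsStanleyDecompOn A M1 u Z) (k : ℕ∞) (hk : ∀ x, k ≤ ((Z x).card : ℕ∞)) :
    ∃ m : ℕ∞, (∃ (r' : ℕ) (u' : Fin r' → Fin n → ℤ) (Z' : Fin r' → Finset (Fin n × Bool)),
        IsStanleyDecompOn (∅ : Finset (Fin n)) M2 u' Z' ∧ ∀ x, m ≤ ((Z' x).card : ℕ∞)) ∧
      k ≤ m + (A.card : ℕ∞) := by
  classical
  have hpjid : ∀ b : Fin n → ℤ, (∀ j ∈ A, b j = 0) → pj A b = b := by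
    intro b hz
    funext j
    by_cases hj : j ∈ A
    · show (if j ∈ A then 0 else b j) = b j
      rw [if_pos hj]
      exact (hz j hj).symm
    · show (if j ∈ A then 0 else b j) = b j
      rw [if_neg hj]
  have hmemM1 : ∀ b, b ∈ M2 ↔ b ∈ M1 ∧ ∀ j ∈ A, b j = 0 := by
    intro b
    constructor
    · intro hb
      have hz : ∀ j ∈ A, b j = 0 := fun j hj => (hM2 hb j).2 hj
      have hS : b ∈ SfMon A := fun j _ => (hM2 hb j).1
      refine ⟨?_, hz⟩
      rw [hM1]
      refine ⟨hS, ?_⟩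
      rw [hpjid b hz]
      exact hb
    · rintro ⟨hb, hz⟩
      rw [hM1] at hb
      have h5 := hb.2
      rwa [hpjid b hz] at h5
  have h2 : ∀ (x : Fin r) (b : Fin n → ℤ), b ∈ stanleySet (u x) (Z x) →
      (∀ j ∈ A, b j = 0) → ∀ j ∈ A, ((j, true) ∈ Z x → u x j ≤ 0) ∧
        ((j, false) ∈ Z x → 0 ≤ u x j) ∧
        ((j, true) ∉ Z x → (j, false) ∉ Z x → u x j = 0) := by
    intro x b hb hz j hj
    obtain ⟨c1, c2, c3⟩ := hb j
    have hbj := hz j hj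
    refine ⟨fun hm => ?_, fun hm => ?_, fun hm1 hm2 => ?_⟩
    · have := c1 hm; omega
    · have := c2 hm; omega
    · have := c3 hm1 hm2; omega
  have h1 : ∀ x : Fin r, (∀ j ∈ A, ((j, true) ∈ Z x → u x j ≤ 0) ∧
        ((j, false) ∈ Z x → 0 ≤ u x j) ∧
        ((j, true) ∉ Z x → (j, false) ∉ Z x → u x j = 0)) → ∀ b : Fin n → ℤ,
      (b ∈ stanleySet (pj A (u x)) ((Z x).filter (fun p => p.1 ∉ A)) ↔
        (b ∈ stanleySet (u x) (Z x) ∧ ∀ j ∈ A, b j = 0)) := by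
    intro x hx b
    constructor
    · intro hb
      have hzero : ∀ j ∈ A, b j = 0 := by
        intro j hj
        have h5 := (hb j).2.2 (fun hm => (Finset.mem_filter.1 hm).2 hj)
          (fun hm => (Finset.mem_filter.1 hm).2 hj)
        have h6 : pj A (u x) j = 0 := if_pos hj
        rw [h6] at h5
        exact h5
      refine ⟨fun j => ?_, hzero⟩
      by_cases hj : j ∈ A
      · obtain ⟨g1, g2, g3⟩ := hx j hj
        have hbj := hzero j hj
        refine ⟨fun hm => ?_, fun hm => ?_, fun hm1 hm2 => ?_⟩
        · have := g1 hm; omega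
        · have := g2 hm; omega
        · have := g3 hm1 hm2; omega
      · have hpj : pj A (u x) j = u x j := if_neg hj
        refine ⟨fun hm => ?_, fun hm => ?_, fun hm1 hm2 => ?_⟩
        · have h5 := (hb j).1 (Finset.mem_filter.2 ⟨hm, hj⟩)
          rwa [hpj] at h5
        · have h5 := (hb j).2.1 (Finset.mem_filter.2 ⟨hm, hj⟩)
          rwa [hpj] at h5
        · have h5 := (hb j).2.2 (fun hmm => hm1 (Finset.mem_filter.1 hmm).1)
            (fun hmm => hm2 (Finset.mem_filter.1 hmm).1)
          rwa [hpj] at h5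
    · rintro ⟨hb, hzero⟩ j
      by_cases hj : j ∈ A
      · have hpj : pj A (u x) j = 0 := if_pos hj
        have h5 : ∀ bb : Bool, (j, bb) ∉ (Z x).filter (fun p => p.1 ∉ A) :=
          fun bb hm => (Finset.mem_filter.1 hm).2 hj
        exact ⟨fun hm => absurd hm (h5 true), fun hm => absurd hm (h5 false),
          fun _ _ => by rw [hpj]; exact hzero j hj⟩
      · have hpj : pj A (u x) j = u x j := if_neg hj
        refine ⟨fun hm => ?_, fun hm => ?_, fun hm1 hm2 => ?_⟩ <;> rw [hpj]
        · exact (hb j).1 (Finset.mem_filter.1 hm).1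
        · exact (hb j).2.1 (Finset.mem_filter.1 hm).1
        · exact (hb j).2.2 (fun hmm => hm1 (Finset.mem_filter.2 ⟨hmm, hj⟩))
            (fun hmm => hm2 (Finset.mem_filter.2 ⟨hmm, hj⟩))
  have hmain : IsStanleyDecompOn (∅ : Finset (Fin n)) M2
      (fun x : {x : Fin r // ∀ j ∈ A, ((j, true) ∈ Z x → u x j ≤ 0) ∧
          ((j, false) ∈ Z x → 0 ≤ u x j) ∧
          ((j, true) ∉ Z x → (j, false) ∉ Z x → u x j = 0)} => pj A (u x.val))
      (fun x => (Z x.val).filter (fun p => p.1 ∉ A)) := by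
    refine ⟨Finite.of_fintype _, ?_, ?_, ?_⟩
    · intro x
      constructor
      · intro j hj
        have hm := Finset.mem_filter.1 hj
        exact absurd ((h.2.1 x.val).1 j hm.1) hm.2
      · rintro j ⟨hjt, hjf⟩
        exact (h.2.1 x.val).2 j ⟨(Finset.mem_filter.1 hjt).1, (Finset.mem_filter.1 hjf).1⟩
    · intro x y hxy
      rw [Set.disjoint_left]
      intro b hbx hby
      have hb1 := (h1 x.val x.2 b).1 hbx
      have hb2 := (h1 y.val y.2 b).1 hby
      have hxv : x.val ≠ y.val := fun hv => hxy (Subtype.ext hv)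
      exact Set.disjoint_left.1 (h.2.2.1 hxv) hb1.1 hb2.1
    · apply Set.Subset.antisymm
      · intro b hb
        obtain ⟨x, hx⟩ := Set.mem_iUnion.1 hb
        have hb1 := (h1 x.val x.2 b).1 hx
        have hbM1 : b ∈ M1 := by
          rw [← h.2.2.2]
          exact Set.mem_iUnion.2 ⟨x.val, hb1.1⟩
        exact (hmemM1 b).2 ⟨hbM1, hb1.2⟩
      · intro b hb
        obtain ⟨hbM1, hz⟩ := (hmemM1 b).1 hb
        rw [← h.2.2.2] at hbM1
        obtain ⟨x, hx⟩ := Set.mem_iUnion.1 hbM1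
        have hgood := h2 x b hx hz
        exact Set.mem_iUnion.2 ⟨⟨x, hgood⟩, (h1 x hgood b).2 ⟨hx, hz⟩⟩
  have hcard : ∀ x : Fin r, (Z x).card ≤ ((Z x).filter (fun p => p.1 ∉ A)).card + A.card := by
    intro x
    have hsplit := Finset.card_filter_add_card_filter_not
      (s := Z x) (p := fun p => p.1 ∉ A)
    have hle : ((Z x).filter (fun p => ¬ p.1 ∉ A)).card ≤ A.card := by
      apply Finset.card_le_card_of_injOn (fun p => p.1)
      · intro p hp
        exact not_not.1 (Finset.mem_filter.1 hp).2
      · intro p hp q hq hpq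
        have hp2 := Finset.mem_filter.1 hp
        have hq2 := Finset.mem_filter.1 hq
        obtain ⟨j1, b1⟩ := p
        obtain ⟨j2, b2⟩ := q
        simp only at hpq
        subst hpq
        cases b1 <;> cases b2
        · rfl
        · exact absurd ⟨hq2.1, hp2.1⟩ ((h.2.1 x).2 j1)
        · exact absurd ⟨hp2.1, hq2.1⟩ ((h.2.1 x).2 j1)
        · rfl
    omega
  obtain ⟨r', u', Z', hdec, hzz⟩ := reindex hmain
  have hr' : 0 < r' := by
    rcases Nat.eq_zero_or_pos r' with hr0 | hr0
    · exfalso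
      obtain ⟨b, hb⟩ := hne
      rw [← hdec.2.2.2] at hb
      obtain ⟨x, -⟩ := Set.mem_iUnion.1 hb
      rw [hr0] at x
      exact x.elim0
    · exact hr0
  obtain ⟨x0, -, hx0⟩ := Finset.exists_mem_eq_inf (Finset.univ : Finset (Fin r'))
    ⟨⟨0, hr'⟩, Finset.mem_univ _⟩ (fun x => ((Z' x).card : ℕ∞))
  refine ⟨Finset.univ.inf (fun x : Fin r' => ((Z' x).card : ℕ∞)),
    ⟨r', u', Z', hdec, fun x => Finset.inf_le (Finset.mem_univ x)⟩, ?_⟩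
  obtain ⟨y, hy⟩ := hzz x0
  rw [hx0, hy]
  calc k ≤ ((Z y.val).card : ℕ∞) := hk y.val
    _ ≤ ((((Z y.val).filter (fun p => p.1 ∉ A)).card + A.card : ℕ) : ℕ∞) :=
        Nat.cast_le.2 (hcard y.val)
    _ = (((Z y.val).filter (fun p => p.1 ∉ A)).card : ℕ∞) + (A.card : ℕ∞) := Nat.cast_add _ _

end SdAux


/-- If `J' ⊂ I' ⊂ S' = K[x_i : i ∉ A]` are monomial ideals with `J = J'·S_f` and
`I = I'·S_f`, then `I/J = (I'/J')[x_i^{±1} : i ∈ A]` and consequently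
`sdepth_{S_f} I/J = sdepth_{S'} I'/J' + |A|`.  (A Stanley decomposition of `I'/J'`
automatically involves only variables `x_i` with `i ∉ A`, so the `S'`-Stanley depth of
`I'/J'` is `sdepth ∅ (I' \ J')`.) -/
theorem sdepth_localization_eq_sdepth_restriction_add {n : ℕ} (A : Finset (Fin n))
    (I J I' J' : Set (Fin n → ℤ))
    (hI' : I' ⊆ SpMon A) (hI'c : ∀ a ∈ I', ∀ c ∈ SpMon A, a + c ∈ I')
    (hJ' : J' ⊆ SpMon A) (hJ'c : ∀ a ∈ J', ∀ c ∈ SpMon A, a + c ∈ J')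
    (hJI' : J' ⊂ I')
    (hIdef : I = {b | ∃ a ∈ I', ∃ c ∈ SfMon A, b = a + c})
    (hJdef : J = {b | ∃ a ∈ J', ∃ c ∈ SfMon A, b = a + c}) :
    I \ J = {b ∈ SfMon A | (fun i => if i ∈ A then 0 else b i) ∈ I' \ J'} ∧
    sdepth A (I \ J) = sdepth (∅ : Finset (Fin n)) (I' \ J') + (A.card : ℕ∞) := by
  classical
  have hpart1 : I \ J = {b ∈ SfMon A | SdAux.pj A b ∈ I' \ J'} := by
    ext b
    constructor
    · rintro ⟨hbI, hbJ⟩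
      rw [hIdef] at hbI
      have h1 := (SdAux.mem_loc_iff A I' hI' hI'c b).1 hbI
      refine ⟨h1.1, h1.2, fun hbJ' => hbJ ?_⟩
      rw [hJdef]
      exact (SdAux.mem_loc_iff A J' hJ' hJ'c b).2 ⟨h1.1, hbJ'⟩
    · rintro ⟨hbS, hbI', hbJ'⟩
      constructor
      · rw [hIdef]
        exact (SdAux.mem_loc_iff A I' hI' hI'c b).2 ⟨hbS, hbI'⟩
      · intro hbJ
        rw [hJdef] at hbJ
        exact hbJ' ((SdAux.mem_loc_iff A J' hJ' hJ'c b).1 hbJ).2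
  refine ⟨hpart1, ?_⟩
  obtain ⟨b0, hb0I, hb0J⟩ := Set.exists_of_ssubset hJI'
  have hneM2 : (I' \ J').Nonempty := ⟨b0, hb0I, hb0J⟩
  have hM2sub : I' \ J' ⊆ SpMon A := fun b hb => hI' hb.1
  -- a Stanley decomposition of I' \ J' exists
  have hSpSupp : SpMon A = SdAux.Supp Aᶜ := by
    ext a
    constructor
    · intro h j
      exact ⟨(h j).1, fun hj => (h j).2 (by simpa using hj)⟩
    · intro h j
      exact ⟨(h j).1, fun hj => (h j).2 (by simpa using hj)⟩
  have hUpI : SdAux.UpC Aᶜ I' := by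
    constructor
    · intro a ha
      rw [← hSpSupp]
      exact hI' ha
    · intro a ha c hc
      exact hI'c a ha c (by rw [hSpSupp]; exact hc)
  have hUpJ : SdAux.UpC Aᶜ J' := by
    constructor
    · intro a ha
      rw [← hSpSupp]
      exact hJ' ha
    · intro a ha c hc
      exact hJ'c a ha c (by rw [hSpSupp]; exact hc)
  obtain ⟨re, ue, Ze, hdece, -⟩ := SdAux.exists_decomp Aᶜ I' J' hUpI hUpJ
  -- the two sets of admissible depths
  set S1 : Set ℕ∞ := {k : ℕ∞ | ∃ (r : ℕ) (u : Fin r → Fin n → ℤ)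
      (Z : Fin r → Finset (Fin n × Bool)),
      IsStanleyDecompOn A (I \ J) u Z ∧ ∀ i, k ≤ ((Z i).card : ℕ∞)} with hS1
  set S2 : Set ℕ∞ := {k : ℕ∞ | ∃ (r : ℕ) (u : Fin r → Fin n → ℤ)
      (Z : Fin r → Finset (Fin n × Bool)),
      IsStanleyDecompOn (∅ : Finset (Fin n)) (I' \ J') u Z ∧ ∀ i, k ≤ ((Z i).card : ℕ∞)} with hS2
  have hshow1 : sdepth A (I \ J) = sSup S1 := by rw [hS1]; rfl
  have hshow2 : sdepth (∅ : Finset (Fin n)) (I' \ J') = sSup S2 := by rw [hS2]; rfl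
  rw [hshow1, hshow2]
  have hdc2 : ∀ k k' : ℕ∞, k ≤ k' → k' ∈ S2 → k ∈ S2 := by
    intro k k' hkk hk'
    rw [hS2] at hk' ⊢
    obtain ⟨r, u, Z, hdec, hk⟩ := hk'
    exact ⟨r, u, Z, hdec, fun i => le_trans hkk (hk i)⟩
  have hne2 : S2.Nonempty := by
    refine ⟨0, ?_⟩
    rw [hS2]
    exact ⟨re, ue, Ze, hdece, fun i => zero_le⟩
  have hdirb : ∀ k ∈ S2, k + (A.card : ℕ∞) ∈ S1 := by
    intro k hk2
    rw [hS2] at hk2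
    obtain ⟨r, u, Z, hdec, hk⟩ := hk2
    obtain ⟨r', u', Z', hdec', hk'⟩ :=
      SdAux.lift_decomp A (I' \ J') hM2sub (I \ J) hpart1 u Z hdec k hk
    rw [hS1]
    exact ⟨r', u', Z', hdec', hk'⟩
  apply le_antisymm
  · apply sSup_le
    intro k hk1
    rw [hS1] at hk1
    obtain ⟨r, u, Z, hdec, hk⟩ := hk1
    obtain ⟨m, ⟨r', u', Z', hdec', hm⟩, hkm⟩ :=
      SdAux.restrict_decomp A (I' \ J') (I \ J) hM2sub hpart1 hneM2 u Z hdec k hk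
    refine le_trans hkm (add_le_add_left (le_sSup ?_) _)
    rw [hS2]
    exact ⟨r', u', Z', hdec', hm⟩
  · by_cases htop : sSup S2 = ⊤
    · rw [htop, top_add]
      refine le_of_forall_lt fun y hy => ?_
      have hy2 : y < sSup S2 := by rw [htop]; exact hy
      obtain ⟨k, hk, hyk⟩ := lt_sSup_iff.1 hy2
      exact lt_of_lt_of_le hyk (le_trans le_self_add (le_sSup (hdirb k hk)))
    · have hmem := SdAux.sSup_mem_of_downward hne2 hdc2 htop
      exact le_sSup (hdirb _ hmem)
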